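/- Let L be the language with one binary relation symbol E and two unary relation symbols R and G. Let A be the L-structure with domain {1,2,3}, E = {(1,1),(2,3),(3,2)}, R = {1,2}, G = {1,3}, and let B be the L-structure with the same domain, the same E, and R = {1}, G = {1}. Then A and B satisfy exactly the same positive Horn sentences. -/

import Mathlib

open FirstOrder Language

/-- Positive Horn bounded formulas over a relational language: built from atomic
formulas `R(v₁,…,vₙ)` (relation symbols applied to variables, no equality) using
only conjunction, existential quantification, and universal quantification. -/
inductive IsPH (L : FirstOrder.Language) : ∀ {n : ℕ}, L.BoundedFormula Empty n → Prop
  | rel {n l : ℕ} (R : L.Relations l) (v : Fin l → Fin n) :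
      IsPH L (BoundedFormula.rel R fun i => Term.var (Sum.inr (v i)))
  | inf {n : ℕ} {φ ψ : L.BoundedFormula Empty n} :
      IsPH L φ → IsPH L ψ → IsPH L (φ ⊓ ψ)
  | ex {n : ℕ} {φ : L.BoundedFormula Empty (n + 1)} : IsPH L φ → IsPH L φ.ex
  | all {n : ℕ} {φ : L.BoundedFormula Empty (n + 1)} : IsPH L φ → IsPH L φ.all

/-- `φ` is true in the `L`-structure on `M` given by `S`. -/
def RealizeIn (L : FirstOrder.Language) (M : Type*) (S : L.Structure M)
    (φ : L.Sentence) : Prop :=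
  @FirstOrder.Language.Sentence.Realize L M S φ

/-- Relation symbols: one binary `E` and two unary `R`, `G`. -/
inductive SymERG : ℕ → Type
  | E : SymERG 2
  | R : SymERG 1
  | G : SymERG 1

/-- The relational language with one binary relation symbol `E` and two unary
relation symbols `R` and `G`. -/
def Lerg : FirstOrder.Language := ⟨fun _ => Empty, SymERG⟩

/-- The structure `A` on domain `{1,2,3}` (encoded as `Fin 3`, with `0,1,2` standing
for `1,2,3`): `E = {(1,1),(2,3),(3,2)}`, `R = {1,2}`, `G = {1,3}`. -/
def strA : Lerg.Structure (Fin 3) where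
  funMap := fun f _ => Empty.elim f
  RelMap := fun S x =>
    match S, x with
    | SymERG.E, x => (x 0 = 0 ∧ x 1 = 0) ∨ (x 0 = 1 ∧ x 1 = 2) ∨ (x 0 = 2 ∧ x 1 = 1)
    | SymERG.R, x => x 0 = 0 ∨ x 0 = 1
    | SymERG.G, x => x 0 = 0 ∨ x 0 = 2

/-- The structure `B` on the same domain with the same `E` and `R = {1}`, `G = {1}`. -/
def strB : Lerg.Structure (Fin 3) where
  funMap := fun f _ => Empty.elim f
  RelMap := fun S x =>
    match S, x with
    | SymERG.E, x => (x 0 = 0 ∧ x 1 = 0) ∨ (x 0 = 1 ∧ x 1 = 2) ∨ (x 0 = 2 ∧ x 1 = 1)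
    | SymERG.R, x => x 0 = 0
    | SymERG.G, x => x 0 = 0

set_option linter.constructorNameAsVariable false

/-- A surjective homomorphism from `A × A` onto `B`. -/
def hAB : Fin 3 × Fin 3 → Fin 3 := fun p => if p = (1,2) then 1 else if p = (2,1) then 2 else 0

/-- A section of `hAB`. -/
def sBA : Fin 3 → Fin 3 × Fin 3 := fun b => if b = 1 then (1,2) else if b = 2 then (2,1) else (0,0)

lemma hAB_sBA (b : Fin 3) : hAB (sBA b) = b := by fin_cases b <;> rfl

lemma keyBA {l : ℕ} (R : SymERG l) (a : Fin l → Fin 3) :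
    strB.RelMap R a → strA.RelMap R a := by
  cases R <;> delta strA strB <;> dsimp only <;> tauto

lemma keyAB {l : ℕ} (R : SymERG l) (a : Fin l → Fin 3 × Fin 3) :
    strA.RelMap R (fun i => (a i).1) → strA.RelMap R (fun i => (a i).2) →
    strB.RelMap R (fun i => hAB (a i)) := by
  cases R
  · delta strA strB; dsimp only; simp only [hAB]
    generalize a 0 = p
    generalize a 1 = q
    revert p q
    decide
  all_goals
    delta strA strB; dsimp only; simp only [hAB]
    generalize a 0 = p
    revert p
    decide


lemma snoc_fst {n : ℕ} (xs : Fin n → Fin 3 × Fin 3) (p : Fin 3 × Fin 3) :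
    (fun i => ((Fin.snoc xs p : Fin (n+1) → Fin 3 × Fin 3) i).1) = Fin.snoc (fun i => (xs i).1) p.1 :=
  by funext i; induction i using Fin.lastCases <;> simp

lemma snoc_snd {n : ℕ} (xs : Fin n → Fin 3 × Fin 3) (p : Fin 3 × Fin 3) :
    (fun i => ((Fin.snoc xs p : Fin (n+1) → Fin 3 × Fin 3) i).2) = Fin.snoc (fun i => (xs i).2) p.2 :=
  by funext i; induction i using Fin.lastCases <;> simp

lemma snoc_hAB {n : ℕ} (xs : Fin n → Fin 3 × Fin 3) (p : Fin 3 × Fin 3) :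
    (fun i => hAB ((Fin.snoc xs p : Fin (n+1) → Fin 3 × Fin 3) i)) = Fin.snoc (fun i => hAB (xs i)) (hAB p) :=
  by funext i; induction i using Fin.lastCases <;> simp

lemma realizeBA : ∀ {n : ℕ} {φ : Lerg.BoundedFormula Empty n}, IsPH Lerg φ →
    ∀ xs : Fin n → Fin 3,
      @BoundedFormula.Realize Lerg (Fin 3) strB Empty n φ Empty.elim xs →
      @BoundedFormula.Realize Lerg (Fin 3) strA Empty n φ Empty.elim xs := by
  intro n φ h
  induction h with
  | rel R v =>
      intro xs hB
      exact keyBA R (fun i => xs (v i)) hB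
  | inf _ _ ih1 ih2 =>
      intro xs hB
      rw [@BoundedFormula.realize_inf Lerg (Fin 3) strB] at hB
      rw [@BoundedFormula.realize_inf Lerg (Fin 3) strA]
      exact ⟨ih1 xs hB.1, ih2 xs hB.2⟩
  | ex _ ih =>
      intro xs hB
      rw [@BoundedFormula.realize_ex Lerg (Fin 3) strB] at hB
      rw [@BoundedFormula.realize_ex Lerg (Fin 3) strA]
      obtain ⟨a, ha⟩ := hB
      exact ⟨a, ih _ ha⟩
  | all _ ih =>
      intro xs hB
      rw [@BoundedFormula.realize_all Lerg (Fin 3) strB] at hB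
      rw [@BoundedFormula.realize_all Lerg (Fin 3) strA]
      exact fun a => ih _ (hB a)

lemma realizeAB : ∀ {n : ℕ} {φ : Lerg.BoundedFormula Empty n}, IsPH Lerg φ →
    ∀ xs : Fin n → Fin 3 × Fin 3,
      @BoundedFormula.Realize Lerg (Fin 3) strA Empty n φ Empty.elim (fun i => (xs i).1) →
      @BoundedFormula.Realize Lerg (Fin 3) strA Empty n φ Empty.elim (fun i => (xs i).2) →
      @BoundedFormula.Realize Lerg (Fin 3) strB Empty n φ Empty.elim (fun i => hAB (xs i)) := by
  intro n φ h
  induction h with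
  | rel R v =>
      intro xs h1 h2
      exact keyAB R (fun i => xs (v i)) h1 h2
  | inf _ _ ih1 ih2 =>
      intro xs h1 h2
      rw [@BoundedFormula.realize_inf Lerg (Fin 3) strA] at h1 h2
      rw [@BoundedFormula.realize_inf Lerg (Fin 3) strB]
      exact ⟨ih1 xs h1.1 h2.1, ih2 xs h1.2 h2.2⟩
  | ex _ ih =>
      intro xs h1 h2
      rw [@BoundedFormula.realize_ex Lerg (Fin 3) strA] at h1 h2
      rw [@BoundedFormula.realize_ex Lerg (Fin 3) strB]
      obtain ⟨a, ha⟩ := h1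
      obtain ⟨b, hb⟩ := h2
      refine ⟨hAB (a, b), ?_⟩
      rw [← snoc_hAB]
      refine ih (Fin.snoc xs (a, b)) ?_ ?_
      · rw [snoc_fst]; exact ha
      · rw [snoc_snd]; exact hb
  | all _ ih =>
      intro xs h1 h2
      rw [@BoundedFormula.realize_all Lerg (Fin 3) strA] at h1 h2
      rw [@BoundedFormula.realize_all Lerg (Fin 3) strB]
      intro b
      have := ih (Fin.snoc xs (sBA b)) (by rw [snoc_fst]; exact h1 _) (by rw [snoc_snd]; exact h2 _)
      rw [snoc_hAB, hAB_sBA] at this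
      exact this


/-- The structures `A` and `B` satisfy exactly the same positive Horn sentences. -/
theorem stmt12 (φ : Lerg.Sentence) (hφ : IsPH Lerg φ) :
    RealizeIn Lerg (Fin 3) strA φ ↔ RealizeIn Lerg (Fin 3) strB φ := by
  have eE : ∀ (f g : Empty → Fin 3), f = g := fun f g => funext fun x => x.elim
  have e0 : ∀ (f g : Fin 0 → Fin 3), f = g := fun f g => funext fun i => i.elim0
  have conv1 : ∀ {S : Lerg.Structure (Fin 3)} (v v' : Empty → Fin 3) (xs xs' : Fin 0 → Fin 3),
      @BoundedFormula.Realize Lerg (Fin 3) S Empty 0 φ v xs →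
      @BoundedFormula.Realize Lerg (Fin 3) S Empty 0 φ v' xs' := by
    intro S v v' xs xs' h
    rwa [eE v' v, e0 xs' xs]
  constructor
  · intro hA
    exact conv1 _ _ _ _
      (realizeAB hφ (fun i => i.elim0) (conv1 _ _ _ _ hA) (conv1 _ _ _ _ hA))
  · intro hB
    exact conv1 _ _ _ _ (realizeBA hφ (fun i => i.elim0) (conv1 _ _ _ _ hB))
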